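/- Every Roelcke precompact topological group has property (OB): whenever G acts separately continuously by isometries on a metric space, every orbit is bounded. -/

import Mathlib

open Pointwise

/-- A topological group is Roelcke precompact if for every neighborhood `U` of the identity
there is a finite set `F` with `G = U F U`. -/
def RoelckePrecompact (G : Type*) [Group G] [TopologicalSpace G] : Prop :=
  ∀ U ∈ nhds (1 : G), ∃ F : Finset G, U * (F : Set G) * U = Set.univ

/-- Every Roelcke precompact topological group has property (OB): every separately
continuous action by isometries on a metric space has bounded orbits. -/
theorem roelckePrecompact_propertyOB {G : Type*} [Group G] [TopologicalSpace G]
    [IsTopologicalGroup G] (hG : RoelckePrecompact G)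
    {X : Type*} [MetricSpace X] [MulAction G X]
    (hiso : ∀ g : G, Isometry fun x : X => g • x)
    (hcont : ∀ x : X, Continuous fun g : G => g • x) :
    ∀ x : X, Bornology.IsBounded (MulAction.orbit G x) := by
  intro x
  set U : Set G := {g | dist (g • x) x < 1} with hUdef
  have hUopen : IsOpen U := by
    have : U = (fun g : G => dist (g • x) x) ⁻¹' Set.Iio 1 := rfl
    rw [this]
    exact (((hcont x).dist continuous_const)).isOpen_preimage _ isOpen_Iio
  have hUmem : U ∈ nhds (1 : G) := hUopen.mem_nhds (by simp [hUdef])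
  obtain ⟨F, hF⟩ := hG U hUmem
  set r : NNReal := F.sup fun f => nndist (f • x) x with hrdef
  have key : ∀ g : G, dist (g • x) x ≤ 1 + (r : ℝ) + 1 := by
    intro g
    have hg : g ∈ U * (F : Set G) * U := hF ▸ Set.mem_univ g
    obtain ⟨a, ha, v, hv, rfl⟩ := hg
    obtain ⟨u, hu, f, hf, rfl⟩ := ha
    have h1 : dist ((u * f * v) • x) ((u * f) • x) = dist (v • x) x := by
      rw [mul_smul]
      exact (hiso (u * f)).dist_eq _ _
    have h2 : dist ((u * f) • x) (u • x) = dist (f • x) x := by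
      rw [mul_smul]
      exact (hiso u).dist_eq _ _
    have hfr : dist (f • x) x ≤ (r : ℝ) := by
      have := Finset.le_sup (f := fun f => nndist (f • x) x) hf
      exact_mod_cast this
    calc dist ((u * f * v) • x) x
        ≤ dist ((u * f * v) • x) ((u * f) • x) + dist ((u * f) • x) (u • x)
            + dist (u • x) x := dist_triangle4 _ _ _ _
      _ = dist (v • x) x + dist (f • x) x + dist (u • x) x := by rw [h1, h2]
      _ ≤ 1 + (r : ℝ) + 1 := by
          have hu' : dist (u • x) x < 1 := hu
          have hv' : dist (v • x) x < 1 := hv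
          linarith
  apply Bornology.IsBounded.subset (Metric.isBounded_closedBall (x := x) (r := 1 + (r : ℝ) + 1))
  rintro _ ⟨g, rfl⟩
  exact Metric.mem_closedBall.mpr (key g)
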